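/- Let L > 0 and let (a_k)_{k≥1} be positive reals and (A_k)_{k≥0} be defined by A_0 = 0 and A_{k+1} = A_k + a_{k+1}. If a_{k+1}²/(A_k + a_{k+1}) ≥ 1/L for all k ≥ 0, then a_k ≥ k/(2L) and A_k ≥ (k+1)²/(4L) ≥ k²/(4L) for all k ≥ 1. -/
import Mathlib


/-- Growth of the coefficient sequence: if `A 0 = 0`,
`A (k+1) = A k + a (k+1)` with `a (k+1) > 0` and
`a (k+1) ^ 2 / (A k + a (k+1)) ≥ 1 / L`, then `a k ≥ k / (2L)` and
`A k ≥ (k+1)² / (4L) ≥ k² / (4L)` for all `k ≥ 1`. -/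
theorem stmt_1 (L : ℝ) (hL : 0 < L) (a A : ℕ → ℝ)
    (hapos : ∀ k, 0 < a (k + 1))
    (hA0 : A 0 = 0) (hAk : ∀ k, A (k + 1) = A k + a (k + 1))
    (ha : ∀ k, (a (k + 1)) ^ 2 / (A k + a (k + 1)) ≥ 1 / L) :
    ∀ k : ℕ, 1 ≤ k → (k : ℝ) / (2 * L) ≤ a k ∧
      ((k : ℝ) + 1) ^ 2 / (4 * L) ≤ A k ∧ (k : ℝ) ^ 2 / (4 * L) ≤ A k := by
  have hAnn : ∀ k, 0 ≤ A k := by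
    intro k
    induction k with
    | zero => simp [hA0]
    | succ n ih => rw [hAk]; have := hapos n; linarith
  have key : ∀ k, A k + a (k + 1) ≤ L * a (k + 1) ^ 2 := by
    intro k
    have hS : 0 < A k + a (k + 1) := by have := hapos k; have := hAnn k; linarith
    have h := ha k
    rw [ge_iff_le, div_le_div_iff₀ hL hS] at h
    linarith
  have main : ∀ k : ℕ, 1 ≤ k → (k : ℝ) / (2 * L) ≤ a k ∧ ((k : ℝ) + 1) ^ 2 / (4 * L) ≤ A k := by
    intro k hk
    induction k with
    | zero => omega
    | succ n ih =>
      rcases Nat.eq_zero_or_pos n with h0 | hn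
      · subst h0
        have h1 := key 0
        rw [hA0] at h1
        have ha1 := hapos 0
        have hL1 : 1 / L ≤ a 1 := by
          rw [div_le_iff₀ hL]; nlinarith
        constructor
        · push_cast
          rw [div_le_iff₀ (by positivity)]
          rw [div_le_iff₀ hL] at hL1
          nlinarith
        · rw [hAk 0, hA0]
          push_cast
          rw [div_le_iff₀ (by positivity)]
          rw [div_le_iff₀ hL] at hL1
          nlinarith
      · obtain ⟨_, hA⟩ := ih hn
        have hkey := key n
        have hap := hapos n
        rw [div_le_iff₀ (by positivity : (0:ℝ) < 4 * L)] at hA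
        have hstep : ((n : ℝ) + 2) ≤ a (n + 1) * (2 * L) := by
          nlinarith [sq_nonneg (2 * L * a (n + 1) - ((n : ℝ) + 2)),
            mul_pos hL hap, hAnn n, sq_nonneg ((n : ℝ) + 1)]
        constructor
        · push_cast
          rw [div_le_iff₀ (by positivity)]
          linarith
        · rw [hAk n]
          push_cast
          rw [div_le_iff₀ (by positivity)]
          nlinarith
  intro k hk
  obtain ⟨h1, h2⟩ := main k hk
  refine ⟨h1, h2, le_trans ?_ h2⟩
  gcongr <;> nlinarith [Nat.cast_nonneg (α := ℝ) k]
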